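/- Let 0 < s < 1, λ₀ > 0, σ' ∈ ℝ, σ ∈ ℝ, and let λ : [0,∞) → (0, λ₀] be any function. Define A_k(t, η) = exp(λ(t)·⟨|k| + |η|⟩^s)·⟨|k| + |η|⟩^(σ+σ') for k ∈ ℤ, η ∈ ℝ, where ⟨x⟩ = (1+x²)^(1/2). Then for each n ∈ ℕ there is a constant C depending only on n, λ₀, s, σ, σ' such that for all t ≥ 0, k ∈ ℤ, η ∈ ℝ, |∂_η^n A_k(t, η)| ≤ C·⟨|k| + |η|⟩^(-n(1-s))·A_k(t, η). -/

import Mathlib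

/-- Japanese bracket. -/
noncomputable def jb (x : ℝ) : ℝ := Real.sqrt (1 + x ^ 2)

/-- The Gevrey Fourier multiplier `A_k^{(σ')}(t,η)` in one frequency dimension. -/
noncomputable def Amult (lam : ℝ → ℝ) (s σ σ' : ℝ) (k : ℤ) (t η : ℝ) : ℝ :=
  Real.exp (lam t * jb (|(k : ℝ)| + |η|) ^ s) * jb (|(k : ℝ)| + |η|) ^ (σ + σ')

open Real Filter Topology Set
open scoped ContDiff

noncomputable section AuxGevrey

/-- `1 + u ^ 2`, the square of the Japanese bracket. -/
def Bu (u : ℝ) : ℝ := 1 + u ^ 2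

lemma Bu_pos (u : ℝ) : 0 < Bu u := by unfold Bu; positivity

lemma Bu_one_le (u : ℝ) : 1 ≤ Bu u := by unfold Bu; nlinarith [sq_nonneg u]

lemma Bu_rpow_pos (u r : ℝ) : 0 < Bu u ^ r := Real.rpow_pos_of_pos (Bu_pos u) r

lemma Bu_rpow_le (u : ℝ) {α β : ℝ} (h : α ≤ β) : Bu u ^ α ≤ Bu u ^ β :=
  Real.rpow_le_rpow_of_exponent_le (Bu_one_le u) h

lemma jb_rpow (x r : ℝ) : jb x ^ r = Bu x ^ (r / 2) := by
  have h0 : (0:ℝ) ≤ 1 + x ^ 2 := by positivity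
  rw [jb, Real.sqrt_eq_rpow, ← Real.rpow_mul h0, one_div, inv_mul_eq_div]
  rfl

lemma Bu_abs (x : ℝ) : Bu |x| = Bu x := by simp [Bu, sq_abs]

def Mo (a : ℕ) (β : ℝ) : ℝ → ℝ := fun u => u ^ a * Bu u ^ β

lemma contDiff_Bu : ContDiff ℝ ∞ Bu := by
  have : ContDiff ℝ ∞ fun u : ℝ => 1 + u ^ 2 := contDiff_const.add (contDiff_id.pow 2)
  exact this

lemma contDiff_Bu_rpow (β : ℝ) : ContDiff ℝ ∞ fun u => Bu u ^ β :=
  contDiff_Bu.rpow_const_of_ne fun x => (Bu_pos x).ne'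

lemma contDiff_Mo (a : ℕ) (β : ℝ) : ContDiff ℝ ∞ (Mo a β) :=
  (contDiff_id.pow a).mul (contDiff_Bu_rpow β)

lemma contDiff_nat_of_inf {f : ℝ → ℝ} (hf : ContDiff ℝ ∞ f) (m : ℕ) : ContDiff ℝ m f :=
  hf.of_le (by exact_mod_cast le_top)

lemma hasDerivAt_Bu (u : ℝ) : HasDerivAt Bu (2 * u) u := by
  unfold Bu
  simpa using (hasDerivAt_pow 2 u).const_add (1:ℝ)

lemma hasDerivAt_Bu_rpow (β u : ℝ) :
    HasDerivAt (fun v => Bu v ^ β) (2 * u * β * Bu u ^ (β - 1)) u :=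
  (hasDerivAt_Bu u).rpow_const (Or.inl (Bu_pos u).ne')

lemma hasDerivAt_Mo (a : ℕ) (β : ℝ) (u : ℝ) :
    HasDerivAt (Mo a β) ((a:ℝ) * Mo (a-1) β u + (2*β) * Mo (a+1) (β-1) u) u := by
  have h := (hasDerivAt_pow a u).mul (hasDerivAt_Bu_rpow β u)
  unfold Mo
  refine h.congr_deriv ?_
  ring

lemma deriv_Mo (a : ℕ) (β : ℝ) :
    deriv (Mo a β) = fun u => (a:ℝ) * Mo (a-1) β u + (2*β) * Mo (a+1) (β-1) u :=
  funext fun u => (hasDerivAt_Mo a β u).deriv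

lemma iterD_add {f g : ℝ → ℝ} (hf : ContDiff ℝ ∞ f) (hg : ContDiff ℝ ∞ g) (m : ℕ) (x : ℝ) :
    iteratedDeriv m (fun u => f u + g u) x = iteratedDeriv m f x + iteratedDeriv m g x := by
  have h := iteratedFDeriv_add_apply (𝕜 := ℝ) (i := m) (x := x)
    (contDiff_nat_of_inf hf m).contDiffAt (contDiff_nat_of_inf hg m).contDiffAt
  simp only [iteratedDeriv_eq_iteratedFDeriv]
  rw [show (fun u => f u + g u) = f + g from rfl, h]
  rfl

lemma iterD_cmul {f : ℝ → ℝ} (hf : ContDiff ℝ ∞ f) (c : ℝ) (m : ℕ) (x : ℝ) :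
    iteratedDeriv m (fun u => c * f u) x = c * iteratedDeriv m f x := by
  have h := iteratedFDeriv_const_smul_apply (𝕜 := ℝ) (x := x) (a := c)
    (contDiff_nat_of_inf hf m).contDiffAt
  simp only [iteratedDeriv_eq_iteratedFDeriv]
  rw [show (fun u => c * f u) = c • f from rfl, h]
  rfl

lemma Mo_bound (m a : ℕ) (β : ℝ) :
    ∃ C : ℝ, 0 < C ∧ ∀ u, |iteratedDeriv m (Mo a β) u| ≤ C * Bu u ^ ((a:ℝ)/2 + β - m/2) := by
  induction m generalizing a β with
  | zero =>
    refine ⟨1, one_pos, fun u => ?_⟩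
    have h0 : (0:ℝ) < Bu u := Bu_pos u
    have habs : |Mo a β u| = |u| ^ a * Bu u ^ β := by
      unfold Mo
      rw [abs_mul, abs_pow, abs_of_pos (Bu_rpow_pos u β)]
    have h1 : |u| ^ a ≤ (Bu u ^ ((1:ℝ)/2)) ^ a := by
      apply pow_le_pow_left₀ (abs_nonneg u)
      rw [← Real.sqrt_eq_rpow, ← Real.sqrt_sq_eq_abs]
      exact Real.sqrt_le_sqrt (by unfold Bu; nlinarith)
    have h2 : |Mo a β u| ≤ (Bu u ^ ((1:ℝ)/2)) ^ a * Bu u ^ β := by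
      rw [habs]; exact mul_le_mul_of_nonneg_right h1 (Bu_rpow_pos u β).le
    have h3 : (Bu u ^ ((1:ℝ)/2)) ^ a * Bu u ^ β = Bu u ^ ((a:ℝ)/2 + β) := by
      rw [← Real.rpow_natCast (Bu u ^ ((1:ℝ)/2)) a, ← Real.rpow_mul h0.le, ← Real.rpow_add h0]
      congr 1
      ring
    rw [iteratedDeriv_zero]
    calc |Mo a β u| ≤ Bu u ^ ((a:ℝ)/2 + β) := by rw [← h3]; exact h2
      _ = 1 * Bu u ^ ((a:ℝ)/2 + β - (0:ℕ)/2) := by norm_num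
  | succ m ih =>
    obtain ⟨C1, hC1, h1⟩ := ih (a-1) β
    obtain ⟨C2, hC2, h2⟩ := ih (a+1) (β-1)
    refine ⟨(a:ℝ) * C1 + 2 * |β| * C2 + 1, by positivity, fun u => ?_⟩
    have hsplit : iteratedDeriv (m+1) (Mo a β) u
        = (a:ℝ) * iteratedDeriv m (Mo (a-1) β) u
          + (2*β) * iteratedDeriv m (Mo (a+1) (β-1)) u := by
      rw [iteratedDeriv_succ', deriv_Mo,
        iterD_add (f := fun u => (a:ℝ) * Mo (a-1) β u) (g := fun u => (2*β) * Mo (a+1) (β-1) u)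
          (contDiff_const.mul (contDiff_Mo (a-1) β)) (contDiff_const.mul (contDiff_Mo (a+1) (β-1))) m u,
        iterD_cmul (contDiff_Mo (a-1) β) ((a:ℝ)) m u,
        iterD_cmul (contDiff_Mo (a+1) (β-1)) (2*β) m u]
    set E : ℝ := (a:ℝ)/2 + β - ((m:ℕ)+1 : ℕ)/2 with hE
    have hEval : E = (a:ℝ)/2 + β - ((m:ℝ)+1)/2 := by rw [hE]; push_cast; ring
    have hterm1 : (a:ℝ) * |iteratedDeriv m (Mo (a-1) β) u| ≤ (a:ℝ) * C1 * Bu u ^ E := by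
      rcases Nat.eq_zero_or_pos a with ha | ha
      · simp [ha]
      · have hcast : ((a-1:ℕ):ℝ) = (a:ℝ) - 1 := by
          rw [Nat.cast_sub ha, Nat.cast_one]
        have := mul_le_mul_of_nonneg_left (h1 u) (Nat.cast_nonneg a : (0:ℝ) ≤ a)
        calc (a:ℝ) * |iteratedDeriv m (Mo (a-1) β) u|
            ≤ (a:ℝ) * (C1 * Bu u ^ (((a-1:ℕ):ℝ)/2 + β - (m:ℝ)/2)) := this
          _ = (a:ℝ) * C1 * Bu u ^ E := by
              rw [hcast, hEval, show ((a:ℝ)-1)/2 + β - (m:ℝ)/2 = (a:ℝ)/2 + β - ((m:ℝ)+1)/2 by ring]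
              ring
    have hterm2 : 2 * |β| * |iteratedDeriv m (Mo (a+1) (β-1)) u| ≤ 2 * |β| * C2 * Bu u ^ E := by
      have := mul_le_mul_of_nonneg_left (h2 u) (by positivity : (0:ℝ) ≤ 2 * |β|)
      calc 2 * |β| * |iteratedDeriv m (Mo (a+1) (β-1)) u|
          ≤ 2 * |β| * (C2 * Bu u ^ (((a+1:ℕ):ℝ)/2 + (β-1) - (m:ℝ)/2)) := this
        _ = 2 * |β| * C2 * Bu u ^ E := by
            rw [hEval, show (((a+1:ℕ)):ℝ)/2 + (β-1) - (m:ℝ)/2 = (a:ℝ)/2 + β - ((m:ℝ)+1)/2 by push_cast; ring]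
            ring
    calc |iteratedDeriv (m+1) (Mo a β) u|
        ≤ (a:ℝ) * |iteratedDeriv m (Mo (a-1) β) u| + 2 * |β| * |iteratedDeriv m (Mo (a+1) (β-1)) u| := by
          rw [hsplit]
          refine (abs_add_le _ _).trans ?_
          rw [abs_mul, abs_mul, Nat.abs_cast, abs_mul, abs_two]
      _ ≤ (a:ℝ) * C1 * Bu u ^ E + 2 * |β| * C2 * Bu u ^ E := add_le_add hterm1 hterm2
      _ ≤ ((a:ℝ) * C1 + 2 * |β| * C2 + 1) * Bu u ^ E := by nlinarith [Bu_rpow_pos u E]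

def Ps (s τ l : ℝ) : ℝ → ℝ := fun u => (l*s) * Mo 1 (s/2-1) u + τ * Mo 1 (-1) u

lemma contDiff_Ps (s τ l : ℝ) : ContDiff ℝ ∞ (Ps s τ l) :=
  (contDiff_const.mul (contDiff_Mo 1 _)).add (contDiff_const.mul (contDiff_Mo 1 _))

def Gg (s τ l : ℝ) : ℝ → ℝ := fun u => Real.exp (l * Bu u ^ (s/2)) * Bu u ^ (τ/2)

lemma Gg_pos (s τ l u : ℝ) : 0 < Gg s τ l u :=
  mul_pos (Real.exp_pos _) (Bu_rpow_pos u _)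

lemma contDiff_Gg (s τ l : ℝ) : ContDiff ℝ ∞ (Gg s τ l) :=
  (Real.contDiff_exp.comp (contDiff_const.mul (contDiff_Bu_rpow (s/2)))).mul
    (contDiff_Bu_rpow (τ/2))

lemma hasDerivAt_Gg (s τ l u : ℝ) :
    HasDerivAt (Gg s τ l) (Ps s τ l u * Gg s τ l u) u := by
  have hV := hasDerivAt_Bu_rpow (s/2) u
  have hE : HasDerivAt (fun v => Real.exp (l * Bu v ^ (s/2)))
      (Real.exp (l * Bu u ^ (s/2)) * (l * (2 * u * (s/2) * Bu u ^ (s/2-1)))) u :=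
    (hV.const_mul l).exp
  have hW := hasDerivAt_Bu_rpow (τ/2) u
  have h := hE.mul hW
  unfold Gg Ps Mo
  refine h.congr_deriv ?_
  rw [show (τ/2 - 1 : ℝ) = (-1) + τ/2 by ring, Real.rpow_add (Bu_pos u)]
  ring

lemma deriv_Gg (s τ l : ℝ) :
    deriv (Gg s τ l) = fun u => Ps s τ l u * Gg s τ l u :=
  funext fun u => (hasDerivAt_Gg s τ l u).deriv

lemma exists_unif {P : ℕ → ℝ → Prop} (h : ∀ j, ∃ C, 0 < C ∧ P j C)
    (mono : ∀ j C C', C ≤ C' → P j C → P j C') (N : ℕ) :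
    ∃ C, 0 < C ∧ ∀ j ≤ N, P j C := by
  induction N with
  | zero =>
    obtain ⟨C, hC, hP⟩ := h 0
    exact ⟨C, hC, fun j hj => by obtain rfl := Nat.le_zero.mp hj; exact hP⟩
  | succ N ih =>
    obtain ⟨C, hC, hP⟩ := ih
    obtain ⟨C', hC', hP'⟩ := h (N+1)
    refine ⟨max C C', lt_max_of_lt_left hC, fun j hj => ?_⟩
    rcases eq_or_lt_of_le hj with rfl | hlt
    · exact mono _ _ _ (le_max_right _ _) hP'
    · exact mono _ _ _ (le_max_left _ _) (hP j (Nat.lt_succ_iff.mp hlt))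

lemma Ps_bound (s lam0 τ : ℝ) (hs0 : 0 < s) (hlam0 : 0 < lam0) (N : ℕ) :
    ∃ C, 0 < C ∧ ∀ j ≤ N, ∀ l, 0 < l → l ≤ lam0 → ∀ u,
      |iteratedDeriv j (Ps s τ l) u| ≤ C * Bu u ^ (-((j:ℝ)+1)*(1-s)/2) := by
  apply exists_unif
    (P := fun j C => ∀ l, 0 < l → l ≤ lam0 → ∀ u,
      |iteratedDeriv j (Ps s τ l) u| ≤ C * Bu u ^ (-((j:ℝ)+1)*(1-s)/2))
  · intro j
    obtain ⟨C1, hC1, h1⟩ := Mo_bound j 1 (s/2-1)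
    obtain ⟨C2, hC2, h2⟩ := Mo_bound j 1 (-1)
    refine ⟨lam0*s*C1 + |τ| * C2 + 1, by positivity, fun l hl0 hl1 u => ?_⟩
    have hsplit : iteratedDeriv j (Ps s τ l) u
        = (l*s) * iteratedDeriv j (Mo 1 (s/2-1)) u + τ * iteratedDeriv j (Mo 1 (-1)) u := by
      unfold Ps
      rw [iterD_add (f := fun u => (l*s) * Mo 1 (s/2-1) u) (g := fun u => τ * Mo 1 (-1) u)
          (contDiff_const.mul (contDiff_Mo 1 _)) (contDiff_const.mul (contDiff_Mo 1 _)) j u,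
        iterD_cmul (contDiff_Mo 1 _) (l*s) j u, iterD_cmul (contDiff_Mo 1 _) τ j u]
    set E : ℝ := -((j:ℝ)+1)*(1-s)/2 with hE
    have hj0 : (0:ℝ) ≤ (j:ℝ) := Nat.cast_nonneg j
    have he1 : ((1:ℕ):ℝ)/2 + (s/2-1) - (j:ℝ)/2 ≤ E := by
      rw [hE]; push_cast; nlinarith [mul_nonneg hj0 hs0.le]
    have he2 : ((1:ℕ):ℝ)/2 + (-1:ℝ) - (j:ℝ)/2 ≤ E := by
      rw [hE]; push_cast; nlinarith [mul_nonneg hj0 hs0.le]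
    have hb1 : |iteratedDeriv j (Mo 1 (s/2-1)) u| ≤ C1 * Bu u ^ E :=
      (h1 u).trans (mul_le_mul_of_nonneg_left (Bu_rpow_le u he1) hC1.le)
    have hb2 : |iteratedDeriv j (Mo 1 (-1)) u| ≤ C2 * Bu u ^ E :=
      (h2 u).trans (mul_le_mul_of_nonneg_left (Bu_rpow_le u he2) hC2.le)
    have habs : |iteratedDeriv j (Ps s τ l) u|
        ≤ (l*s) * |iteratedDeriv j (Mo 1 (s/2-1)) u| + |τ| * |iteratedDeriv j (Mo 1 (-1)) u| := by
      rw [hsplit]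
      refine (abs_add_le _ _).trans ?_
      simp only [abs_mul, abs_of_pos hl0, abs_of_pos hs0, le_refl]
    have hls : l * s ≤ lam0 * s := mul_le_mul_of_nonneg_right hl1 hs0.le
    calc |iteratedDeriv j (Ps s τ l) u|
        ≤ (l*s) * |iteratedDeriv j (Mo 1 (s/2-1)) u| + |τ| * |iteratedDeriv j (Mo 1 (-1)) u| := habs
      _ ≤ (lam0*s) * (C1 * Bu u ^ E) + |τ| * (C2 * Bu u ^ E) := by
          refine add_le_add ?_ ?_
          · exact mul_le_mul hls hb1 (abs_nonneg _) (by positivity)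
          · exact mul_le_mul_of_nonneg_left hb2 (abs_nonneg τ)
      _ ≤ (lam0*s*C1 + |τ| * C2 + 1) * Bu u ^ E := by nlinarith [Bu_rpow_pos u E]
  · intro j C C' hCC' hP l hl0 hl1 u
    exact (hP l hl0 hl1 u).trans (mul_le_mul_of_nonneg_right hCC' (Bu_rpow_pos u _).le)

lemma Gg_bound (s lam0 τ : ℝ) (hs0 : 0 < s) (hlam0 : 0 < lam0) (n : ℕ) :
    ∃ C, 0 < C ∧ ∀ m ≤ n, ∀ l, 0 < l → l ≤ lam0 → ∀ u,
      |iteratedDeriv m (Gg s τ l) u| ≤ C * Bu u ^ (-(m:ℝ)*(1-s)/2) * Gg s τ l u := by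
  induction n with
  | zero =>
    refine ⟨1, one_pos, fun m hm l hl0 hl1 u => ?_⟩
    obtain rfl := Nat.le_zero.mp hm
    simp only [iteratedDeriv_zero, Nat.cast_zero, neg_zero, zero_mul, zero_div,
      Real.rpow_zero, one_mul, abs_of_pos (Gg_pos s τ l u), le_refl]
  | succ n ih =>
    obtain ⟨C, hC, hP⟩ := ih
    obtain ⟨Cψ, hCψ, hψ⟩ := Ps_bound s lam0 τ hs0 hlam0 n
    refine ⟨max C (2^n * Cψ * C), lt_max_of_lt_left hC, fun m hm l hl0 hl1 u => ?_⟩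
    rcases eq_or_lt_of_le hm with rfl | hlt
    · -- m = n+1
      have hGsm : ContDiff ℝ ∞ (Gg s τ l) := contDiff_Gg s τ l
      have hPsm : ContDiff ℝ ∞ (Ps s τ l) := contDiff_Ps s τ l
      have step1 : iteratedDeriv (n+1) (Gg s τ l) u
          = iteratedDeriv n (fun v => Ps s τ l v * Gg s τ l v) u := by
        rw [iteratedDeriv_succ', deriv_Gg]
      set E : ℝ := -((n:ℝ)+1)*(1-s)/2 with hE
      have key : ∀ i ∈ Finset.range (n+1),
          (n.choose i : ℝ) * ‖iteratedFDeriv ℝ i (Ps s τ l) u‖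
            * ‖iteratedFDeriv ℝ (n-i) (Gg s τ l) u‖
          ≤ (n.choose i : ℝ) * (Cψ * C * (Bu u ^ E * Gg s τ l u)) := by
        intro i hi
        have hin : i ≤ n := Nat.lt_succ_iff.mp (Finset.mem_range.mp hi)
        have hψi := hψ i hin l hl0 hl1 u
        have hGi := hP (n-i) (Nat.sub_le n i) l hl0 hl1 u
        rw [norm_iteratedFDeriv_eq_norm_iteratedDeriv, norm_iteratedFDeriv_eq_norm_iteratedDeriv,
          Real.norm_eq_abs, Real.norm_eq_abs]
        have hsum : Bu u ^ (-((i:ℝ)+1)*(1-s)/2) * Bu u ^ (-((n-i:ℕ):ℝ)*(1-s)/2) = Bu u ^ E := by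
          rw [← Real.rpow_add (Bu_pos u)]
          congr 1
          rw [Nat.cast_sub hin, hE]
          ring
        calc (n.choose i : ℝ) * |iteratedDeriv i (Ps s τ l) u| * |iteratedDeriv (n-i) (Gg s τ l) u|
            ≤ (n.choose i : ℝ) * (Cψ * Bu u ^ (-((i:ℝ)+1)*(1-s)/2))
              * (C * Bu u ^ (-((n-i:ℕ):ℝ)*(1-s)/2) * Gg s τ l u) := by
              refine mul_le_mul ?_ hGi (abs_nonneg _)
                (mul_nonneg (Nat.cast_nonneg _) (mul_nonneg hCψ.le (Bu_rpow_pos u _).le))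
              exact mul_le_mul_of_nonneg_left hψi (Nat.cast_nonneg _)
          _ = (n.choose i : ℝ) * (Cψ * C * (Bu u ^ E * Gg s τ l u)) := by
              rw [← hsum]; ring
      have hle : ((n : ℕ) : WithTop ℕ∞) ≤ ∞ := by exact_mod_cast le_top
      calc |iteratedDeriv (n+1) (Gg s τ l) u|
          = ‖iteratedFDeriv ℝ n (fun v => Ps s τ l v * Gg s τ l v) u‖ := by
            rw [step1, ← Real.norm_eq_abs, ← norm_iteratedFDeriv_eq_norm_iteratedDeriv]
        _ ≤ ∑ i ∈ Finset.range (n+1), (n.choose i : ℝ) * ‖iteratedFDeriv ℝ i (Ps s τ l) u‖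
              * ‖iteratedFDeriv ℝ (n-i) (Gg s τ l) u‖ :=
            norm_iteratedFDeriv_mul_le hPsm hGsm u hle
        _ ≤ ∑ i ∈ Finset.range (n+1), (n.choose i : ℝ) * (Cψ * C * (Bu u ^ E * Gg s τ l u)) :=
            Finset.sum_le_sum key
        _ = (2^n : ℝ) * Cψ * C * (Bu u ^ E * Gg s τ l u) := by
            rw [← Finset.sum_mul]
            have hsumc : ∑ i ∈ Finset.range (n+1), (n.choose i : ℝ) = 2^n := by
              exact_mod_cast Nat.sum_range_choose n
            rw [hsumc]; ring
        _ ≤ max C (2^n * Cψ * C) * Bu u ^ (-((n+1:ℕ):ℝ)*(1-s)/2) * Gg s τ l u := by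
            have hcast : -(((n+1:ℕ)):ℝ)*(1-s)/2 = E := by rw [hE]; push_cast; ring
            rw [hcast]
            have h2 : (2:ℝ)^n * Cψ * C ≤ max C (2^n * Cψ * C) := le_max_right _ _
            nlinarith [Bu_rpow_pos u E, Gg_pos s τ l u,
              mul_pos (Bu_rpow_pos u E) (Gg_pos s τ l u)]
    · have := hP m (Nat.lt_succ_iff.mp hlt) l hl0 hl1 u
      refine this.trans ?_
      exact mul_le_mul_of_nonneg_right
        (mul_le_mul_of_nonneg_right (le_max_left C (2^n * Cψ * C))
          (Bu_rpow_pos u (-(m:ℝ)*(1-s)/2)).le)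
        (Gg_pos s τ l u).le

end AuxGevrey

theorem stmt_11 (s lam0 σ σ' : ℝ) (hs0 : 0 < s) (hs1 : s < 1) (hlam0 : 0 < lam0)
    (n : ℕ) :
    ∃ C : ℝ, 0 < C ∧
      ∀ lam : ℝ → ℝ, (∀ t : ℝ, 0 ≤ t → 0 < lam t ∧ lam t ≤ lam0) →
        ∀ t : ℝ, 0 ≤ t → ∀ k : ℤ, ∀ η : ℝ,
          |iteratedDeriv n (fun y => Amult lam s σ σ' k t y) η| ≤
            C * jb (|(k : ℝ)| + |η|) ^ (-(n : ℝ) * (1 - s)) * Amult lam s σ σ' k t η := by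
  obtain ⟨C, hC, hG⟩ := Gg_bound s lam0 (σ+σ') hs0 hlam0 n
  refine ⟨C, hC, ?_⟩
  intro lam hlam t ht k η
  obtain ⟨hl0, hl1⟩ := hlam t ht
  have hA : ∀ y : ℝ, Amult lam s σ σ' k t y = Gg s (σ+σ') (lam t) (|(k:ℝ)| + |y|) := by
    intro y; unfold Amult Gg; rw [jb_rpow, jb_rpow]
  rw [hA η, jb_rpow]
  set c := |(k:ℝ)| with hc
  set l := lam t with hl
  rcases lt_trichotomy η 0 with hneg | rfl | hpos
  · -- η < 0
    have hEq : (fun y => Amult lam s σ σ' k t y) =ᶠ[𝓝 η]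
        (fun y => Gg s (σ+σ') l (c + -y)) := by
      filter_upwards [gt_mem_nhds hneg] with y hy
      rw [hA y, abs_of_neg hy]
    rw [hEq.iteratedDeriv_eq n]
    rw [show (fun y : ℝ => Gg s (σ+σ') l (c + -y))
        = (fun y : ℝ => (fun z => Gg s (σ+σ') l (c + z)) (-y)) from rfl]
    rw [iteratedDeriv_comp_neg n (fun z => Gg s (σ+σ') l (c + z)) η]
    rw [iteratedDeriv_comp_const_add n (Gg s (σ+σ') l) c]
    simpa [smul_eq_mul, abs_mul, abs_pow, abs_of_neg hneg] using
      hG n le_rfl l hl0 hl1 (c + -η)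
  · -- η = 0
    by_cases hk : k = 0
    · have hc0 : c = 0 := by simp [hc, hk]
      have hfun : (fun y => Amult lam s σ σ' k t y) = Gg s (σ+σ') l := by
        funext y
        rw [hA y, hc0, zero_add]
        unfold Gg
        rw [Bu_abs]
      rw [hfun]
      simpa [hc0] using hG n le_rfl l hl0 hl1 0
    · cases n with
      | zero =>
        simpa [iteratedDeriv_zero, hA] using hG 0 le_rfl l hl0 hl1 (c + |(0:ℝ)|)
      | succ m =>
        have hval : ∀ y : ℝ, 0 < y →
            iteratedDeriv m (fun y => Amult lam s σ σ' k t y) y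
              = iteratedDeriv m (Gg s (σ+σ') l) (c + y) := by
          intro y hy
          have hEq : (fun y => Amult lam s σ σ' k t y) =ᶠ[𝓝 y]
              (fun z => Gg s (σ+σ') l (c + z)) := by
            filter_upwards [lt_mem_nhds hy] with z hz
            rw [hA z, abs_of_pos hz]
          rw [hEq.iteratedDeriv_eq m, iteratedDeriv_comp_const_add m (Gg s (σ+σ') l) c]
        set F : ℝ → ℝ := fun y => iteratedDeriv m (Gg s (σ+σ') l) (c + y) with hF
        have hGsm : ContDiff ℝ ∞ (Gg s (σ+σ') l) := contDiff_Gg _ _ _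
        have hdiffF : HasDerivAt F (iteratedDeriv (m+1) (Gg s (σ+σ') l) c) 0 := by
          have hdm : DifferentiableAt ℝ (iteratedDeriv m (Gg s (σ+σ') l)) (c + 0) :=
            ((contDiff_nat_of_inf hGsm (m+1)).differentiable_iteratedDeriv m
              (by exact_mod_cast Nat.lt_succ_self m)).differentiableAt
          have h1 : HasDerivAt (iteratedDeriv m (Gg s (σ+σ') l))
              (iteratedDeriv (m+1) (Gg s (σ+σ') l) (c+0)) (c+0) := by
            have := hdm.hasDerivAt
            rwa [← iteratedDeriv_succ] at this
          have h2 : HasDerivAt (fun y : ℝ => c + y) 1 0 := by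
            simpa using (hasDerivAt_id (0:ℝ)).const_add c
          have h3 := h1.comp 0 h2
          exact h3.congr_deriv (by simp)
        by_cases hD : DifferentiableAt ℝ (iteratedDeriv m (fun y => Amult lam s σ σ' k t y)) 0
        · have hcont : Tendsto (iteratedDeriv m (fun y => Amult lam s σ σ' k t y)) (𝓝[>] (0:ℝ))
              (𝓝 (iteratedDeriv m (fun y => Amult lam s σ σ' k t y) 0)) :=
            (hD.continuousAt.tendsto).mono_left nhdsWithin_le_nhds
          have hFtend : Tendsto (iteratedDeriv m (fun y => Amult lam s σ σ' k t y)) (𝓝[>] (0:ℝ))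
              (𝓝 (F 0)) := by
            refine Tendsto.congr' ?_ ((hdiffF.continuousAt.tendsto).mono_left nhdsWithin_le_nhds)
            filter_upwards [self_mem_nhdsWithin] with y hy
            exact (hval y hy).symm
          have h00 : iteratedDeriv m (fun y => Amult lam s σ σ' k t y) 0 = F 0 :=
            tendsto_nhds_unique hcont hFtend
          have hsub : Ioi (0:ℝ) ⊆ {(0:ℝ)}ᶜ := fun y hy => by
            simpa using (ne_of_gt hy)
          have hsl1 : Tendsto (slope (iteratedDeriv m (fun y => Amult lam s σ σ' k t y)) 0)
              (𝓝[>] 0) (𝓝 (deriv (iteratedDeriv m (fun y => Amult lam s σ σ' k t y)) 0)) :=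
            (hasDerivAt_iff_tendsto_slope.mp hD.hasDerivAt).mono_left (nhdsWithin_mono 0 hsub)
          have hsl2 : Tendsto (slope (iteratedDeriv m (fun y => Amult lam s σ σ' k t y)) 0)
              (𝓝[>] 0) (𝓝 (iteratedDeriv (m+1) (Gg s (σ+σ') l) c)) := by
            refine Tendsto.congr' ?_
              ((hasDerivAt_iff_tendsto_slope.mp hdiffF).mono_left (nhdsWithin_mono 0 hsub))
            filter_upwards [self_mem_nhdsWithin] with y hy
            rw [slope_def_field, slope_def_field, hval y hy, h00]
          have hederiv : deriv (iteratedDeriv m (fun y => Amult lam s σ σ' k t y)) 0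
              = iteratedDeriv (m+1) (Gg s (σ+σ') l) c := tendsto_nhds_unique hsl1 hsl2
          rw [iteratedDeriv_succ, hederiv]
          simpa using hG (m+1) le_rfl l hl0 hl1 c
        · rw [iteratedDeriv_succ, deriv_zero_of_not_differentiableAt hD, abs_zero]
          exact (mul_pos (mul_pos hC (Bu_rpow_pos _ _)) (Gg_pos _ _ _ _)).le
  · -- η > 0
    have hEq : (fun y => Amult lam s σ σ' k t y) =ᶠ[𝓝 η]
        (fun y => Gg s (σ+σ') l (c + y)) := by
      filter_upwards [lt_mem_nhds hpos] with y hy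
      rw [hA y, abs_of_pos hy]
    rw [hEq.iteratedDeriv_eq n, iteratedDeriv_comp_const_add n (Gg s (σ+σ') l) c]
    simpa [abs_of_pos hpos] using hG n le_rfl l hl0 hl1 (c + η)
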